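/- Let H be a reduced double-well type potential with data (H_n^0), (H_n^1), and let h be the Peierls barrier of H. Then: (1) h(0^∞, x) = 0 for all x in the cylinder [0]; (2) h(0^∞, x) = inf_{k≥n} H_k^0 for all x ∈ [1^n 0], and in particular h(0^∞, 1^∞) = H_∞^0; (3) liminf of h(x, 0^∞) as x → 0^∞ with x ≠ 0^∞ equals H_min^0 + H_∞^1; (4) h(1^∞, x) = 0 for all x ∈ [1]; (5) h(1^∞, x) = inf_{k≥n} H_k^1 for all x ∈ [0^n 1], and in particular h(1^∞, 0^∞) = H_∞^1; (6) liminf of h(x, 1^∞) as x → 1^∞ with x ≠ 1^∞ equals H_min^1 + H_∞^0. -/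

import Mathlib

open MeasureTheory Filter Topology

/-- The one-sided full shift space on two symbols. -/
abbrev Sig : Type := ℕ → Fin 2

/-- The left shift map. -/
def shft : Sig → Sig := fun x n => x (n + 1)

/-- Concatenation of a symbol with a configuration. -/
def cons2 (i : Fin 2) (x : Sig) : Sig := fun n => match n with
  | 0 => i
  | Nat.succ k => x k

/-- `x` and `y` agree on their first `n` coordinates. -/
def nClose (n : ℕ) (x y : Sig) : Prop := ∀ k, k < n → x k = y k

/-- The `n`-th variation of `H`. -/
noncomputable def Var (H : Sig → ℝ) (n : ℕ) : ℝ :=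
  sSup {d : ℝ | ∃ x y : Sig, nClose n x y ∧ d = |H x - H y|}

/-- `H` has summable variation. -/
def SummableVar (H : Sig → ℝ) : Prop := Summable (fun n : ℕ => Var H (n + 1))

/-- The transfer operator at inverse temperature `β`. -/
noncomputable def transfer (β : ℝ) (H : Sig → ℝ) (Φ : Sig → ℝ) : Sig → ℝ :=
  fun x => Real.exp (-β * H (cons2 0 x)) * Φ (cons2 0 x)
         + Real.exp (-β * H (cons2 1 x)) * Φ (cons2 1 x)

/-- The cylinder set determined by a finite word. -/
def cyl (w : List (Fin 2)) : Set Sig := {x | ∀ i : ℕ, ∀ h : i < w.length, x i = w.get ⟨i, h⟩}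

/-- The fixed point `0^∞`. -/
def zpt : Sig := fun _ => 0

/-- The fixed point `1^∞`. -/
def opt : Sig := fun _ => 1

/-- The minimizing ergodic value of `H`. -/
noncomputable def Hbar (H : Sig → ℝ) : ℝ :=
  sInf {r : ℝ | ∃ μ : Measure Sig, IsProbabilityMeasure μ ∧ μ.map shft = μ ∧ r = ∫ x, H x ∂μ}

/-- A minimizing measure for `H`. -/
def IsMinimizing (H : Sig → ℝ) (μ : Measure Sig) : Prop :=
  IsProbabilityMeasure μ ∧ μ.map shft = μ ∧
  ∀ ν : Measure Sig, IsProbabilityMeasure ν → ν.map shft = ν →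
    ∫ x, H x ∂μ ≤ ∫ x, H x ∂ν

/-- The (topological) support of a measure. -/
def mSupport (μ : Measure Sig) : Set Sig := {x | ∀ U : Set Sig, IsOpen U → x ∈ U → μ U ≠ 0}

/-- The Mather set of `H` : union of supports of minimizing measures. -/
def mather (H : Sig → ℝ) : Set Sig := {x | ∃ μ : Measure Sig, IsMinimizing H μ ∧ x ∈ mSupport μ}

/-- Birkhoff sum of the normalized potential. -/
noncomputable def birk (H : Sig → ℝ) (k : ℕ) (z : Sig) : ℝ :=
  ∑ i ∈ Finset.range k, (H (shft^[i] z) - Hbar H)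

/-- The quantity `S_n^p(x,y)` (an infimum in `EReal`, `+∞` when the defining set is empty). -/
noncomputable def SBar (H : Sig → ℝ) (p n : ℕ) (x y : Sig) : EReal :=
  sInf {s : EReal | ∃ k : ℕ, n ≤ k ∧ ∃ z : Sig, nClose p z x ∧ nClose p (shft^[k] z) y ∧
    s = (birk H k z : EReal)}

/-- The Peierls barrier `h(x,y)`; since `S_n^p(x,y)` is nondecreasing in both `n` and `p`,
the double limit is a double supremum. -/
noncomputable def peierls (H : Sig → ℝ) (x y : Sig) : EReal := ⨆ p : ℕ, ⨆ n : ℕ, SBar H p n x y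

/-- The Lax-Oleinik operator (the two preimages of `y` under the shift are `0y` and `1y`). -/
noncomputable def laxOleinik (H V : Sig → ℝ) : Sig → ℝ :=
  fun y => min (V (cons2 0 y) + H (cons2 0 y)) (V (cons2 1 y) + H (cons2 1 y))

/-- A calibrated sub-action of `H`. -/
def IsCalibrated (H V : Sig → ℝ) : Prop :=
  Continuous V ∧ laxOleinik H V = fun y => V y + Hbar H

/-- Membership in the class `𝕂`. -/
def InK (H V : Sig → ℝ) : Prop :=
  Continuous V ∧ ∀ n : ℕ, 1 ≤ n → Var V n ≤ ∑' k : ℕ, Var H (n + 1 + k)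

/-- A reduced double-well type potential with data `(H_n^0)`, `(H_n^1)` (indexed from `n = 1`). -/
structure ReducedDW (H : Sig → ℝ) (H0 H1 : ℕ → ℝ) : Prop where
  cont : Continuous H
  nonneg : ∀ x, 0 ≤ H x
  svar : SummableVar H
  zero : ∀ x ∈ cyl [0, 0] ∪ cyl [1, 1], H x = 0
  pos0 : ∀ n, 1 ≤ n → 0 < H0 n
  pos1 : ∀ n, 1 ≤ n → 0 < H1 n
  val0 : ∀ n, 1 ≤ n → ∀ x ∈ cyl (0 :: (List.replicate n 1 ++ [0])), H x = H0 n
  val1 : ∀ n, 1 ≤ n → ∀ x ∈ cyl (1 :: (List.replicate n 0 ++ [1])), H x = H1 n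
  bdd0 : ∀ k : ℕ, BddAbove (Set.range fun n : ℕ => |H0 (k + 1) - H0 (k + 1 + n)|)
  bdd1 : ∀ k : ℕ, BddAbove (Set.range fun n : ℕ => |H1 (k + 1) - H1 (k + 1 + n)|)
  sum0 : Summable (fun k : ℕ => ⨆ n : ℕ, |H0 (k + 1) - H0 (k + 1 + n)|)
  sum1 : Summable (fun k : ℕ => ⨆ n : ℕ, |H1 (k + 1) - H1 (k + 1 + n)|)

/-- A double-well type potential with data `a_n^0, a_n^1, b_n^0, b_n^1` (indexed from `n = 1`). -/
structure DW (H : Sig → ℝ) (a0 a1 b0 b1 : ℕ → ℝ) : Prop where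
  cont : Continuous H
  nonneg : ∀ x, 0 ≤ H x
  svar : SummableVar H
  anneg0 : ∀ n, 1 ≤ n → 0 ≤ a0 n
  anneg1 : ∀ n, 1 ≤ n → 0 ≤ a1 n
  bpos0 : ∀ n, 1 ≤ n → 0 < b0 n
  bpos1 : ∀ n, 1 ≤ n → 0 < b1 n
  vala0 : ∀ n, 1 ≤ n → ∀ x ∈ cyl (0 :: (List.replicate n 0 ++ [1])), H x = a0 n
  vala1 : ∀ n, 1 ≤ n → ∀ x ∈ cyl (1 :: (List.replicate n 1 ++ [0])), H x = a1 n
  valb0 : ∀ n, 1 ≤ n → ∀ x ∈ cyl (0 :: (List.replicate n 1 ++ [0])), H x = b0 n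
  valb1 : ∀ n, 1 ≤ n → ∀ x ∈ cyl (1 :: (List.replicate n 0 ++ [1])), H x = b1 n
  suma0 : Summable (fun n : ℕ => ((n + 1 : ℕ) : ℝ) * a0 (n + 1))
  suma1 : Summable (fun n : ℕ => ((n + 1 : ℕ) : ℝ) * a1 (n + 1))
  bddb0 : ∀ k : ℕ, BddAbove (Set.range fun n : ℕ => |b0 (k + 1) - b0 (k + 1 + n)|)
  bddb1 : ∀ k : ℕ, BddAbove (Set.range fun n : ℕ => |b1 (k + 1) - b1 (k + 1 + n)|)
  sumb0 : Summable (fun k : ℕ => ⨆ n : ℕ, |b0 (k + 1) - b0 (k + 1 + n)|)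
  sumb1 : Summable (fun k : ℕ => ⨆ n : ℕ, |b1 (k + 1) - b1 (k + 1 + n)|)

/-- The series `F_β(λ) = Σ_{k≥1} λ^{-k} e^{-β H_k}`. -/
noncomputable def Fser (β : ℝ) (Hs : ℕ → ℝ) (lam : ℝ) : ℝ :=
  ∑' k : ℕ, (lam ^ (k + 1))⁻¹ * Real.exp (-β * Hs (k + 1))

/-- The series `F̃_β(λ) = Σ_{k≥1} k λ^{-k} e^{-β H_k}`. -/
noncomputable def Ftser (β : ℝ) (Hs : ℕ → ℝ) (lam : ℝ) : ℝ :=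
  ∑' k : ℕ, ((k + 1 : ℕ) : ℝ) * (lam ^ (k + 1))⁻¹ * Real.exp (-β * Hs (k + 1))

/-- The data of the Ruelle-Perron-Frobenius solution and Gibbs measure at inverse temperature `β`:
eigenfunction `Φ` (positive, continuous, max 1), eigenvalue `lam`, eigenprobability `ν`,
and the Gibbs measure `μ = Φ ν / ∫ Φ dν`. -/
def GibbsData (H : Sig → ℝ) (β : ℝ) (Φ : Sig → ℝ) (lam : ℝ) (ν μ : Measure Sig) : Prop :=
  Continuous Φ ∧ (∀ x, 0 < Φ x) ∧ IsGreatest (Set.range Φ) 1 ∧ 0 < lam ∧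
  (transfer β H Φ = fun x => lam * Φ x) ∧
  IsProbabilityMeasure ν ∧
  (∀ f : Sig → ℝ, Continuous f → ∫ x, transfer β H f x ∂ν = lam * ∫ x, f x ∂ν) ∧
  μ = (ENNReal.ofReal (∫ x, Φ x ∂ν))⁻¹ • ν.withDensity (fun x => ENNReal.ofReal (Φ x))


-- ===================== auxiliary lemmas =====================

lemma fin2_ne (a : Fin 2) (h : a ≠ 0) : a = 1 := by omega
lemma fin2_ne' (a : Fin 2) (h : a ≠ 1) : a = 0 := by omega

lemma shft_iter (z : Sig) (k n : ℕ) : (shft^[k] z) n = z (n + k) := by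
  induction k generalizing z n with
  | zero => rfl
  | succ k ih => rw [Function.iterate_succ_apply, ih]; simp [shft]; ring_nf

lemma get_word (a b c : Fin 2) (m i : ℕ) (h : i < (a :: (List.replicate m b ++ [c])).length) :
    (a :: (List.replicate m b ++ [c])).get ⟨i, h⟩ = if i = 0 then a else if i ≤ m then b else c := by
  match i with
  | 0 => rfl
  | Nat.succ i =>
    simp only [List.get_eq_getElem, List.getElem_cons_succ]
    rcases lt_or_ge i m with hi | hi
    · rw [List.getElem_append_left (by simpa using hi), List.getElem_replicate]
      simp [Nat.succ_le_of_lt hi]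
    · have him : i = m := by
        simp only [List.length_cons, List.length_append, List.length_replicate,
          List.length_nil] at h; omega
      subst him
      rw [List.getElem_append_right (by simp)]
      simp

lemma mem_cyl_word (a b c : Fin 2) (m : ℕ) (x : Sig)
    (h0 : x 0 = a) (h1 : ∀ i, 1 ≤ i → i ≤ m → x i = b) (h2 : x (m+1) = c) :
    x ∈ cyl (a :: (List.replicate m b ++ [c])) := by
  intro i hi
  rw [get_word]
  have hlen : i < m + 2 := by
    simp only [List.length_cons, List.length_append, List.length_replicate,
      List.length_nil] at hi; omega
  split_ifs with e1 e2
  · subst e1; exact h0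
  · exact h1 i (by omega) e2
  · have : i = m + 1 := by omega
    subst this; exact h2

lemma mem_cyl_word2 (b c : Fin 2) (m : ℕ) (x : Sig)
    (h1 : ∀ i, i < m → x i = b) (h2 : x m = c) :
    x ∈ cyl (List.replicate m b ++ [c]) := by
  intro i hi
  have hlen : i < m + 1 := by
    simp only [List.length_cons, List.length_append, List.length_replicate,
      List.length_nil] at hi; omega
  rcases lt_or_ge i m with h | h
  · simp only [List.get_eq_getElem]
    rw [List.getElem_append_left (by simpa using h), List.getElem_replicate]
    exact h1 i h
  · have : i = m := by omega
    subst this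
    simp only [List.get_eq_getElem]
    rw [List.getElem_append_right (by simp)]
    simpa using h2

lemma mem_cyl_pair (a b : Fin 2) (x : Sig) (h0 : x 0 = a) (h1 : x 1 = b) :
    x ∈ cyl [a, b] := by
  intro i hi
  match i with
  | 0 => exact h0
  | 1 => exact h1
  | (n+2) => simp at hi

lemma measurable_shft : Measurable shft :=
  measurable_pi_lambda _ (fun n => measurable_pi_apply (n+1))

lemma shft_zpt : shft zpt = zpt := rfl

lemma Hbar_zero (H : Sig → ℝ) (hpos : ∀ x, 0 ≤ H x) (hz : H zpt = 0) : Hbar H = 0 := by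
  set S := {r : ℝ | ∃ μ : Measure Sig, IsProbabilityMeasure μ ∧ μ.map shft = μ ∧ r = ∫ x, H x ∂μ}
  have hmem : (0:ℝ) ∈ S := by
    refine ⟨Measure.dirac zpt, inferInstance, ?_, ?_⟩
    · rw [Measure.map_dirac' measurable_shft, shft_zpt]
    · rw [integral_dirac H zpt, hz]
  have hlb : ∀ r ∈ S, (0:ℝ) ≤ r := by
    rintro r ⟨μ, h1, h2, rfl⟩
    exact integral_nonneg hpos
  exact le_antisymm (csInf_le ⟨0, hlb⟩ hmem) (le_csInf ⟨0, hmem⟩ hlb)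

lemma birk_eq (H : Sig → ℝ) (hb : Hbar H = 0) (k : ℕ) (z : Sig) :
    birk H k z = ∑ i ∈ Finset.range k, H (shft^[i] z) := by
  simp [birk, hb]

lemma ereal_le_ciInf {a : EReal} {f : ℕ → ℝ} (h : ∀ m, a ≤ (f m : EReal)) :
    a ≤ ((⨅ m, f m : ℝ) : EReal) := by
  induction a using EReal.rec with
  | bot => exact bot_le
  | coe s => exact EReal.coe_le_coe_iff.2 (le_ciInf fun m => EReal.coe_le_coe_iff.1 (h m))
  | top => exact absurd (h 0) (by simp)

lemma ereal_le_of_forall_sub {c : ℝ} {a : EReal}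
    (h : ∀ ε : ℝ, 0 < ε → ((c - ε : ℝ) : EReal) ≤ a) : (c : EReal) ≤ a := by
  induction a using EReal.rec with
  | bot =>
    have := h 1 one_pos
    exact absurd (le_bot_iff.1 this) (EReal.coe_ne_bot _)
  | coe s =>
    refine EReal.coe_le_coe_iff.2 ?_
    by_contra hs
    push_neg at hs
    have := EReal.coe_le_coe_iff.1 (h ((c - s)/2) (by linarith))
    linarith
  | top => exact le_top



lemma get_word2 (b c : Fin 2) (m i : ℕ) (h : i < (List.replicate m b ++ [c]).length) :
    (List.replicate m b ++ [c]).get ⟨i, h⟩ = if i < m then b else c := by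
  rcases lt_or_ge i m with hi | hi
  · simp only [List.get_eq_getElem]
    rw [List.getElem_append_left (by simpa using hi), List.getElem_replicate]
    simp [hi]
  · have : i = m := by
      simp only [List.length_append, List.length_replicate, List.length_cons,
        List.length_nil] at h; omega
    subst this
    simp only [List.get_eq_getElem]
    rw [List.getElem_append_right (by simp)]
    simp [lt_irrefl]

lemma cyl_word2_spec {x : Sig} {b c : Fin 2} {m : ℕ}
    (hx : x ∈ cyl (List.replicate m b ++ [c])) :
    (∀ i, i < m → x i = b) ∧ x m = c := by
  have hlen : (List.replicate m b ++ [c]).length = m + 1 := by simp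
  constructor
  · intro i hi
    have := hx i (by omega)
    rwa [get_word2, if_pos hi] at this
  · have := hx m (by omega)
    rwa [get_word2, if_neg (lt_irrefl m)] at this

section Evals

variable {H : Sig → ℝ} {H0 H1 : ℕ → ℝ} (hR : ReducedDW H H0 H1)
include hR

lemma H_zz {x : Sig} (h0 : x 0 = 0) (h1 : x 1 = 0) : H x = 0 :=
  hR.zero x (Or.inl (mem_cyl_pair 0 0 x h0 h1))

lemma H_oo {x : Sig} (h0 : x 0 = 1) (h1 : x 1 = 1) : H x = 0 :=
  hR.zero x (Or.inr (mem_cyl_pair 1 1 x h0 h1))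

lemma H_block0 {z : Sig} {j m : ℕ} (hm : 1 ≤ m) (h0 : z j = 0)
    (h1 : ∀ i, 1 ≤ i → i ≤ m → z (j+i) = 1) (h2 : z (j+m+1) = 0) :
    H (shft^[j] z) = H0 m := by
  apply hR.val0 m hm
  apply mem_cyl_word
  · rw [shft_iter]; simpa using h0
  · intro i hi1 hi2; rw [shft_iter, Nat.add_comm]; exact h1 i hi1 hi2
  · rw [shft_iter]
    have e : m + 1 + j = j + m + 1 := by ring
    rw [e]; exact h2

lemma H_block1 {z : Sig} {j m : ℕ} (hm : 1 ≤ m) (h0 : z j = 1)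
    (h1 : ∀ i, 1 ≤ i → i ≤ m → z (j+i) = 0) (h2 : z (j+m+1) = 1) :
    H (shft^[j] z) = H1 m := by
  apply hR.val1 m hm
  apply mem_cyl_word
  · rw [shft_iter]; simpa using h0
  · intro i hi1 hi2; rw [shft_iter, Nat.add_comm]; exact h1 i hi1 hi2
  · rw [shft_iter]
    have e : m + 1 + j = j + m + 1 := by ring
    rw [e]; exact h2

omit hR in
lemma sig_tail0 {z : Sig} {j : ℕ} (h1 : z j = 1) (h0 : ∀ i, j < i → z i = 0) :
    shft^[j] z = cons2 1 zpt := by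
  funext n
  rw [shft_iter]
  match n with
  | 0 => simpa [cons2] using h1
  | (n+1) => simpa [cons2, zpt] using h0 (n+1+j) (by omega)

omit hR in
lemma sig_tail1 {z : Sig} {j : ℕ} (h1 : z j = 0) (h0 : ∀ i, j < i → z i = 1) :
    shft^[j] z = cons2 0 opt := by
  funext n
  rw [shft_iter]
  match n with
  | 0 => simpa [cons2] using h1
  | (n+1) => simpa [cons2, opt] using h0 (n+1+j) (by omega)

lemma H_lim1 {Hinf1 : ℝ} (hinf1 : Tendsto H1 atTop (𝓝 Hinf1)) : H (cons2 1 zpt) = Hinf1 := by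
  set xn : ℕ → Sig := fun n i => if 1 ≤ i ∧ i ≤ n then 0 else 1 with hxn
  have hx : ∀ n, 1 ≤ n → H (xn n) = H1 n := by
    intro n hn
    apply hR.val1 n hn
    apply mem_cyl_word
    · simp [xn]
    · intro i h1 h2; simp [xn, h1, h2]
    · simp [xn]
  have hconv : Tendsto xn atTop (𝓝 (cons2 1 zpt)) := by
    rw [tendsto_pi_nhds]
    intro i
    apply tendsto_const_nhds.congr'
    filter_upwards [eventually_ge_atTop i] with n hn
    match i with
    | 0 => simp [xn, cons2]
    | (i+1) =>
      have : 1 ≤ i + 1 ∧ i + 1 ≤ n := ⟨by omega, hn⟩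
      simp [xn, cons2, zpt, this]
  have h2 : Tendsto (fun n => H (xn n)) atTop (𝓝 (H (cons2 1 zpt))) :=
    (hR.cont.tendsto _).comp hconv
  have h3 : (fun n => H (xn n)) =ᶠ[atTop] H1 := by
    filter_upwards [eventually_ge_atTop 1] with n hn
    exact hx n hn
  exact tendsto_nhds_unique (h2.congr' h3) hinf1

lemma H_lim0 {Hinf0 : ℝ} (hinf0 : Tendsto H0 atTop (𝓝 Hinf0)) : H (cons2 0 opt) = Hinf0 := by
  set xn : ℕ → Sig := fun n i => if 1 ≤ i ∧ i ≤ n then 1 else 0 with hxn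
  have hx : ∀ n, 1 ≤ n → H (xn n) = H0 n := by
    intro n hn
    apply hR.val0 n hn
    apply mem_cyl_word
    · simp [xn]
    · intro i h1 h2; simp [xn, h1, h2]
    · simp [xn]
  have hconv : Tendsto xn atTop (𝓝 (cons2 0 opt)) := by
    rw [tendsto_pi_nhds]
    intro i
    apply tendsto_const_nhds.congr'
    filter_upwards [eventually_ge_atTop i] with n hn
    match i with
    | 0 => simp [xn, cons2]
    | (i+1) =>
      have : 1 ≤ i + 1 ∧ i + 1 ≤ n := ⟨by omega, hn⟩
      simp [xn, cons2, opt, this]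
  have h2 : Tendsto (fun n => H (xn n)) atTop (𝓝 (H (cons2 0 opt))) :=
    (hR.cont.tendsto _).comp hconv
  have h3 : (fun n => H (xn n)) =ᶠ[atTop] H0 := by
    filter_upwards [eventually_ge_atTop 1] with n hn
    exact hx n hn
  exact tendsto_nhds_unique (h2.congr' h3) hinf0

lemma hbar0 : Hbar H = 0 :=
  Hbar_zero H hR.nonneg (H_zz hR rfl rfl)

lemma birk_nonneg (k : ℕ) (z : Sig) : 0 ≤ birk H k z := by
  rw [birk_eq _ (hbar0 hR)]
  exact Finset.sum_nonneg fun i _ => hR.nonneg _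

lemma SBar_nonneg (p n : ℕ) (x y : Sig) : 0 ≤ SBar H p n x y := by
  apply le_sInf
  rintro s ⟨k, hk, z, h1, h2, rfl⟩
  exact_mod_cast EReal.coe_nonneg.2 (birk_nonneg hR k z)

lemma peierls_nonneg (x y : Sig) : 0 ≤ peierls H x y :=
  le_iSup_of_le 0 (le_iSup_of_le 0 (SBar_nonneg hR 0 0 x y))

omit hR in
lemma SBar_le_birk {p n : ℕ} {x y : Sig} (k : ℕ) (hk : n ≤ k) (z : Sig)
    (h1 : nClose p z x) (h2 : nClose p (shft^[k] z) y) :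
    SBar H p n x y ≤ ((birk H k z : ℝ) : EReal) :=
  sInf_le ⟨k, hk, z, h1, h2, rfl⟩

end Evals


section Main

variable {H : Sig → ℝ} {H0 H1 : ℕ → ℝ} (hR : ReducedDW H H0 H1)
include hR

omit hR in
lemma exists_last_eq {z : Sig} {k j : ℕ} {c : Fin 2} (hj : j < k) (hzj : z j = c) :
    ∃ t, t < k ∧ z t = c ∧ ∀ i, t < i → i < k → z i ≠ c := by
  classical
  set t := Nat.findGreatest (fun i => z i = c) (k-1) with ht
  refine ⟨t, ?_, Nat.findGreatest_spec (P := fun i => z i = c) (show j ≤ k - 1 by omega) hzj, ?_⟩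
  · have := Nat.findGreatest_le (P := fun i => z i = c) (k-1)
    omega
  · intro i h1 h2
    exact Nat.findGreatest_is_greatest h1 (by omega)

omit hR in
lemma exists_first_after {z : Sig} {j : ℕ} {c : Fin 2} (h : ∃ i, j < i ∧ z i = c) :
    ∃ u, j < u ∧ z u = c ∧ ∀ i, j < i → i < u → z i ≠ c := by
  classical
  refine ⟨Nat.find h, (Nat.find_spec h).1, (Nat.find_spec h).2, ?_⟩
  intro i h1 h2 hc
  exact Nat.find_min h h2 ⟨h1, hc⟩

lemma main1 : ∀ x ∈ cyl [0], peierls H zpt x = 0 := by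
  intro x hx
  have hx0 : x 0 = 0 := by simpa using hx 0 (by simp)
  refine le_antisymm ?_ (peierls_nonneg hR zpt x)
  refine iSup_le fun p => iSup_le fun n => ?_
  set m := max p n with hm
  set z : Sig := fun i => if i < m then 0 else x (i - m) with hzdef
  have hzz : shft^[m] z = x := by
    funext i
    rw [shft_iter]
    simp [hzdef]
  have hb : birk H m z = 0 := by
    rw [birk_eq _ (hbar0 hR)]
    apply Finset.sum_eq_zero
    intro i hi
    rw [Finset.mem_range] at hi
    apply H_zz hR
    · rw [shft_iter]; simp [hzdef, hi]
    · rw [shft_iter]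
      by_cases h : 1 + i < m
      · simp [hzdef, h]
      · have e : 1 + i = m := by omega
        simp [hzdef, e, hx0]
  have hle : SBar H p n zpt x ≤ ((birk H m z : ℝ) : EReal) := by
    apply SBar_le_birk m (le_max_right p n) z
    · intro k hk
      simp [hzdef, lt_of_lt_of_le hk (le_max_left p n), zpt]
      intro h; omega
    · rw [hzz]; intro k _; rfl
  rw [hb] at hle
  simpa using hle

lemma H0_bdd {f : ℕ → ℕ} (hf : ∀ m, 1 ≤ f m) : BddBelow (Set.range fun m => H0 (f m)) := by
  refine ⟨0, ?_⟩
  rintro r ⟨m, rfl⟩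
  exact (hR.pos0 _ (hf m)).le

lemma H1_bdd {f : ℕ → ℕ} (hf : ∀ m, 1 ≤ f m) : BddBelow (Set.range fun m => H1 (f m)) := by
  refine ⟨0, ?_⟩
  rintro r ⟨m, rfl⟩
  exact (hR.pos1 _ (hf m)).le

lemma main2 : ∀ n : ℕ, 1 ≤ n → ∀ x ∈ cyl (List.replicate n 1 ++ [0]),
    peierls H zpt x = ((⨅ k : ℕ, H0 (n + k) : ℝ) : EReal) := by
  intro n hn x hx
  obtain ⟨hx1, hx0⟩ := cyl_word2_spec hx
  apply le_antisymm
  · -- upper bound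
    apply ereal_le_ciInf
    intro m
    refine iSup_le fun p => iSup_le fun n' => ?_
    obtain ⟨j, hjp, hjn⟩ : ∃ j : ℕ, p < j ∧ n' ≤ j := ⟨max p n' + 1, by omega, by omega⟩
    set z : Sig := fun i => if i < j then 0 else if i < j + m then 1 else x (i - (j+m))
      with hzdef
    have z0 : ∀ i, i < j → z i = 0 := by intro i h; simp only [hzdef]; rw [if_pos h]
    have z1 : ∀ i, j ≤ i → i < j + m → z i = 1 := by
      intro i h h'
      simp only [hzdef]; rw [if_neg (by omega), if_pos h']
    have z2 : ∀ i, j + m ≤ i → z i = x (i - (j+m)) := by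
      intro i h
      simp only [hzdef]; rw [if_neg (by omega), if_neg (by omega)]
    have hσ : shft^[j+m] z = x := by
      funext i
      rw [shft_iter, z2 _ (by omega)]
      congr 1
      omega
    have hb : birk H (j+m) z = H0 (n + m) := by
      rw [birk_eq _ (hbar0 hR)]
      rw [Finset.sum_eq_single_of_mem (j-1) (Finset.mem_range.2 (by omega)) ?_]
      · apply H_block0 hR (by omega)
        · exact z0 _ (by omega)
        · intro i hi1 hi2
          by_cases hc : j - 1 + i < j + m
          · exact z1 _ (by omega) hc
          · rw [z2 _ (by omega)]
            have e : j - 1 + i - (j + m) = i - m - 1 := by omega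
            rw [e]
            exact hx1 _ (by omega)
        · rw [z2 _ (by omega)]
          have e : j - 1 + (n+m) + 1 - (j+m) = n := by omega
          rw [e]; exact hx0
      · intro i hi hne
        rw [Finset.mem_range] at hi
        rcases lt_or_ge i j with h' | h'
        · apply H_zz hR
          · rw [shft_iter]; exact z0 _ (by omega)
          · rw [shft_iter]; exact z0 _ (by omega)
        · apply H_oo hR
          · rw [shft_iter]; exact z1 _ (by omega) (by omega)
          · rw [shft_iter]
            by_cases hc : 1 + i < j + m
            · exact z1 _ (by omega) hc
            · rw [z2 _ (by omega)]
              have e : 1 + i - (j+m) = 0 := by omega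
              rw [e]
              exact hx1 0 (by omega)
    have hle : SBar H p n' zpt x ≤ ((birk H (j+m) z : ℝ) : EReal) := by
      apply SBar_le_birk (j+m) (by omega) z
      · intro k hk
        rw [z0 _ (by omega)]; rfl
      · rw [hσ]; intro k _; rfl
    rw [hb] at hle
    exact hle
  · -- lower bound
    refine le_iSup_of_le (n+1) (le_iSup_of_le 1 ?_)
    apply le_sInf
    rintro s ⟨k, hk, z, h1, h2, rfl⟩
    have hz0 : z 0 = 0 := h1 0 (by omega)
    have hzx : ∀ i, i < n + 1 → z (i + k) = x i := by
      intro i hi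
      have := h2 i hi
      rwa [shft_iter] at this
    obtain ⟨t, htk, hzt, hone'⟩ := exists_last_eq (c := 0) (show 0 < k by omega) hz0
    have hone : ∀ i, t < i → i < k → z i = 1 := fun i hi1 hi2 =>
      fin2_ne _ (hone' i hi1 hi2)
    have hHb : H (shft^[t] z) = H0 (n + (k - 1 - t)) := by
      apply H_block0 hR (by omega) hzt
      · intro i hi1 hi2
        rcases lt_or_ge (t + i) k with hc | hc
        · exact hone _ (by omega) hc
        · have e : t + i = (t + i - k) + k := by omega
          rw [e]
          exact (hzx _ (by omega)).trans (hx1 _ (by omega))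
      · have e : t + (n + (k - 1 - t)) + 1 = n + k := by omega
        rw [e]
        exact (hzx n (by omega)).trans hx0
    have hb : (⨅ k : ℕ, H0 (n + k)) ≤ birk H k z := by
      have h1' : (⨅ j : ℕ, H0 (n + j)) ≤ H0 (n + (k - 1 - t)) := by
        apply ciInf_le
        refine ⟨0, ?_⟩
        rintro r ⟨m, rfl⟩
        exact (hR.pos0 _ (by omega)).le
      refine h1'.trans ?_
      rw [birk_eq _ (hbar0 hR), ← hHb]
      refine Finset.single_le_sum (f := fun i => H (shft^[i] z)) (fun i _ => hR.nonneg _) ?_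
      exact Finset.mem_range.2 (by omega)
    exact EReal.coe_le_coe_iff.2 hb


lemma main2' {Hinf0 : ℝ} (hinf0 : Tendsto H0 atTop (𝓝 Hinf0)) :
    peierls H zpt opt = ((Hinf0 : ℝ) : EReal) := by
  apply le_antisymm
  · -- upper bound
    refine iSup_le fun p => iSup_le fun n' => ?_
    obtain ⟨j, hjp, hjn⟩ : ∃ j : ℕ, p < j ∧ n' ≤ j := ⟨max p n' + 1, by omega, by omega⟩
    set z : Sig := fun i => if i < j then 0 else 1 with hzdef
    have z0 : ∀ i, i < j → z i = 0 := by intro i h; simp only [hzdef]; rw [if_pos h]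
    have z1 : ∀ i, j ≤ i → z i = 1 := by intro i h; simp only [hzdef]; rw [if_neg (by omega)]
    have hσ : shft^[j] z = opt := by
      funext i; rw [shft_iter]; exact z1 _ (by omega)
    have hb : birk H j z = Hinf0 := by
      rw [birk_eq _ (hbar0 hR)]
      rw [Finset.sum_eq_single_of_mem (j-1) (Finset.mem_range.2 (by omega)) ?_]
      · rw [sig_tail1 (z0 _ (by omega)) (fun i hi => z1 _ (by omega))]
        exact H_lim0 hR hinf0
      · intro i hi hne
        rw [Finset.mem_range] at hi
        apply H_zz hR
        · rw [shft_iter]; exact z0 _ (by omega)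
        · rw [shft_iter]; exact z0 _ (by omega)
    have hle : SBar H p n' zpt opt ≤ ((birk H j z : ℝ) : EReal) := by
      apply SBar_le_birk j (by omega) z
      · intro i hi; rw [z0 _ (by omega)]; rfl
      · rw [hσ]; intro i _; rfl
    rw [hb] at hle
    exact hle
  · -- lower bound
    apply ereal_le_of_forall_sub
    intro ε hε
    obtain ⟨D, hD⟩ : ∃ D, ∀ d ≥ D, Hinf0 - ε < H0 d := by
      have := hinf0.eventually (eventually_gt_nhds (show Hinf0 - ε < Hinf0 by linarith))
      rwa [eventually_atTop] at this
    refine le_iSup_of_le (D+1) (le_iSup_of_le 1 ?_)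
    apply le_sInf
    rintro s ⟨k, hk, z, h1, h2, rfl⟩
    have hz0 : z 0 = 0 := h1 0 (by omega)
    have hzo : ∀ i, i < D + 1 → z (i + k) = 1 := by
      intro i hi
      have := h2 i hi
      rwa [shft_iter] at this
    obtain ⟨t, htk, hzt, hone'⟩ := exists_last_eq (c := 0) (show 0 < k by omega) hz0
    have hone : ∀ i, t < i → i < k + D + 1 → z i = 1 := by
      intro i hi1 hi2
      rcases lt_or_ge i k with h | h
      · exact fin2_ne _ (hone' i hi1 h)
      · have e : i = (i - k) + k := by omega
        rw [e]; exact hzo _ (by omega)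
    have key : Hinf0 - ε ≤ H (shft^[t] z) := by
      by_cases hall : ∀ i, t < i → z i = 1
      · rw [sig_tail1 hzt hall, H_lim0 hR hinf0]; linarith
      · push_neg at hall
        obtain ⟨w, hw1, hw2⟩ := hall
        obtain ⟨u, hu1, hu2, hu3⟩ := exists_first_after (c := 0) ⟨w, hw1, fin2_ne' _ hw2⟩
        have huk : k + D + 1 ≤ u := by
          by_contra hc
          push_neg at hc
          have := hone u hu1 hc
          rw [this] at hu2
          exact absurd hu2 (by decide)
        have hH : H (shft^[t] z) = H0 (u - t - 1) := by
          apply H_block0 hR (by omega) hzt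
          · intro i h1' h2'
            exact fin2_ne _ (hu3 _ (by omega) (by omega))
          · have e : t + (u - t - 1) + 1 = u := by omega
            rw [e]; exact hu2
        rw [hH]
        exact (hD _ (by omega)).le
    have hb : Hinf0 - ε ≤ birk H k z := by
      refine key.trans ?_
      rw [birk_eq _ (hbar0 hR)]
      refine Finset.single_le_sum (f := fun i => H (shft^[i] z)) (fun i _ => hR.nonneg _) ?_
      exact Finset.mem_range.2 (by omega)
    exact EReal.coe_le_coe_iff.2 hb

lemma peierls_q_le {Hinf1 : ℝ} (hinf1 : Tendsto H1 atTop (𝓝 Hinf1)) (j m : ℕ)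
    (hj : 1 ≤ j) (hm : 1 ≤ m) :
    peierls H (fun i => if i < j then 0 else if i < j + m then 1 else 0) zpt
      ≤ ((H0 m + Hinf1 : ℝ) : EReal) := by
  set q : Sig := fun i => if i < j then 0 else if i < j + m then 1 else 0 with hq
  have q0 : ∀ i, i < j → q i = 0 := by intro i h; simp only [hq]; rw [if_pos h]
  have q1 : ∀ i, j ≤ i → i < j + m → q i = 1 := by
    intro i h h'; simp only [hq]; rw [if_neg (by omega), if_pos h']
  have q2 : ∀ i, j + m ≤ i → q i = 0 := by
    intro i h; simp only [hq]; rw [if_neg (by omega), if_neg (by omega)]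
  refine iSup_le fun p => iSup_le fun n' => ?_
  obtain ⟨k, hk1, hk2⟩ : ∃ k : ℕ, n' ≤ k ∧ j + m ≤ k := ⟨max n' (j+m), by omega, by omega⟩
  have hb : birk H k q = H0 m + Hinf1 := by
    rw [birk_eq _ (hbar0 hR)]
    have hsum : ∀ i ∈ Finset.range k, H (shft^[i] q)
        = (if i = j - 1 then H0 m else 0) + (if i = j + m - 1 then Hinf1 else 0) := by
      intro i hi
      rw [Finset.mem_range] at hi
      by_cases e1 : i = j - 1
      · subst e1
        rw [if_pos rfl, if_neg (by omega), add_zero]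
        apply H_block0 hR hm (q0 _ (by omega))
        · intro i' h1' h2'
          exact q1 _ (by omega) (by omega)
        · exact q2 _ (by omega)
      · by_cases e2 : i = j + m - 1
        · subst e2
          rw [if_neg e1, if_pos rfl, zero_add]
          rw [sig_tail0 (q1 _ (by omega) (by omega)) (fun i' hi' => q2 _ (by omega))]
          exact H_lim1 hR hinf1
        · rw [if_neg e1, if_neg e2, add_zero]
          rcases lt_or_ge i (j-1) with h1 | h1
          · apply H_zz hR
            · rw [shft_iter]; exact q0 _ (by omega)
            · rw [shft_iter]; exact q0 _ (by omega)
          · rcases lt_or_ge i (j+m-1) with h2 | h2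
            · apply H_oo hR
              · rw [shft_iter]; exact q1 _ (by omega) (by omega)
              · rw [shft_iter]; exact q1 _ (by omega) (by omega)
            · apply H_zz hR
              · rw [shft_iter]; exact q2 _ (by omega)
              · rw [shft_iter]; exact q2 _ (by omega)
    rw [Finset.sum_congr rfl hsum, Finset.sum_add_distrib]
    rw [Finset.sum_ite_eq' (Finset.range k) (j-1) (fun _ => H0 m),
        Finset.sum_ite_eq' (Finset.range k) (j+m-1) (fun _ => Hinf1)]
    rw [if_pos (Finset.mem_range.2 (by omega)), if_pos (Finset.mem_range.2 (by omega))]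
  have hle : SBar H p n' q zpt ≤ ((birk H k q : ℝ) : EReal) := by
    apply SBar_le_birk k hk1 q (fun i _ => rfl)
    intro i hi
    rw [shft_iter]
    rw [q2 _ (by omega)]
    rfl
  rw [hb] at hle
  exact hle

lemma main3_lower {Hinf1 : ℝ} (hinf1 : Tendsto H1 atTop (𝓝 Hinf1)) :
    ∀ x ∈ cyl [0], x ≠ zpt →
      (((⨅ n : ℕ, H0 (n + 1)) + Hinf1 : ℝ) : EReal) ≤ peierls H x zpt := by
  intro x hx hne
  have hx0 : x 0 = 0 := by simpa using hx 0 (by simp)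
  apply ereal_le_of_forall_sub
  intro ε hε
  obtain ⟨D, hD⟩ : ∃ D, ∀ d ≥ D, Hinf1 - ε < H1 d := by
    have := hinf1.eventually (eventually_gt_nhds (show Hinf1 - ε < Hinf1 by linarith))
    rwa [eventually_atTop] at this
  have hex : ∃ i, 0 < i ∧ x i = 1 := by
    by_contra hc
    push_neg at hc
    apply hne
    funext i
    rcases Nat.eq_zero_or_pos i with h | h
    · rw [h]; exact hx0
    · exact fin2_ne' _ (hc i h)
  obtain ⟨j, hj1, hj2, hj3⟩ := exists_first_after (c := 1) hex
  have hxj' : x (j-1) = 0 := by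
    by_cases h : j - 1 = 0
    · rw [h]; exact hx0
    · exact fin2_ne' _ (hj3 (j-1) (by omega) (by omega))
  obtain ⟨p, hp1, hp2⟩ : ∃ p : ℕ, j + 1 ≤ p ∧ D ≤ p := ⟨max (j+1) D, by omega, by omega⟩
  refine le_iSup_of_le p (le_iSup_of_le p ?_)
  apply le_sInf
  rintro s ⟨k, hk, z, h1, h2, rfl⟩
  have hzx : ∀ i, i < p → z i = x i := h1
  have hz0 : ∀ i, i < p → z (i + k) = 0 := by
    intro i hi
    have := h2 i hi
    rwa [shft_iter] at this
  have hzj : z j = 1 := (hzx j (by omega)).trans hj2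
  have hzj' : z (j-1) = 0 := (hzx _ (by omega)).trans hxj'
  have hzk : z k = 0 := by simpa using hz0 0 (by omega)
  obtain ⟨u, hu1, hu2, hu3⟩ := exists_first_after (c := 0)
    (⟨k, by omega, hzk⟩ : ∃ i, j < i ∧ z i = 0)
  have hup : H (shft^[j-1] z) = H0 (u - j) := by
    apply H_block0 hR (by omega) hzj'
    · intro i h1' h2'
      by_cases e : j - 1 + i = j
      · rw [e]; exact hzj
      · exact fin2_ne _ (hu3 _ (by omega) (by omega))
    · have e : j - 1 + (u - j) + 1 = u := by omega
      rw [e]; exact hu2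
  obtain ⟨T, hT1, hT2, hT3⟩ := exists_last_eq (c := 1) (show j < k by omega) hzj
  have hTz : ∀ i, T < i → i < k + p → z i = 0 := by
    intro i h1' h2'
    rcases lt_or_ge i k with h | h
    · exact fin2_ne' _ (hT3 i h1' h)
    · have e : i = (i - k) + k := by omega
      rw [e]; exact hz0 _ (by omega)
  have hdown : Hinf1 - ε ≤ H (shft^[T] z) := by
    by_cases hall : ∀ i, T < i → z i = 0
    · rw [sig_tail0 hT2 hall, H_lim1 hR hinf1]; linarith
    · push_neg at hall
      obtain ⟨w, hw1, hw2⟩ := hall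
      obtain ⟨v, hv1, hv2, hv3⟩ := exists_first_after (c := 1) ⟨w, hw1, fin2_ne _ hw2⟩
      have hvk : k + p ≤ v := by
        by_contra hc
        push_neg at hc
        have := hTz v hv1 hc
        rw [this] at hv2
        exact absurd hv2 (by decide)
      have hH : H (shft^[T] z) = H1 (v - T - 1) := by
        apply H_block1 hR (by omega) hT2
        · intro i h1' h2'
          exact fin2_ne' _ (hv3 _ (by omega) (by omega))
        · have e : T + (v - T - 1) + 1 = v := by omega
          rw [e]; exact hv2
      rw [hH]
      exact (hD _ (by omega)).le
  have hne2 : j - 1 ≠ T := by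
    intro e
    rw [← e] at hT2
    rw [hzj'] at hT2
    exact absurd hT2 (by decide)
  have hsum : H (shft^[j-1] z) + H (shft^[T] z) ≤ birk H k z := by
    rw [birk_eq _ (hbar0 hR)]
    have hsub : ({j-1, T} : Finset ℕ) ⊆ Finset.range k := by
      intro i hi
      simp only [Finset.mem_insert, Finset.mem_singleton] at hi
      rcases hi with e | e <;> (subst e; exact Finset.mem_range.2 (by omega))
    calc H (shft^[j-1] z) + H (shft^[T] z)
        = ∑ i ∈ ({j-1, T} : Finset ℕ), H (shft^[i] z) := (Finset.sum_pair (f := fun i => H (shft^[i] z)) hne2).symm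
      _ ≤ _ := Finset.sum_le_sum_of_subset_of_nonneg hsub (fun i _ _ => hR.nonneg _)
  have h0 : (⨅ n : ℕ, H0 (n+1)) ≤ H (shft^[j-1] z) := by
    rw [hup]
    have hle : (⨅ n : ℕ, H0 (n+1)) ≤ H0 ((u - j - 1) + 1) := by
      apply ciInf_le
      refine ⟨0, ?_⟩
      rintro r ⟨i, rfl⟩
      exact (hR.pos0 _ (by omega)).le
    have e : u - j - 1 + 1 = u - j := by omega
    rwa [e] at hle
  have lower : (⨅ n : ℕ, H0 (n+1)) + Hinf1 - ε ≤ birk H k z := by linarith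
  exact EReal.coe_le_coe_iff.2 lower


omit hR in
lemma q_tendsto (m : ℕ) :
    Tendsto (fun j : ℕ => (fun i => if i < j then 0 else if i < j + m then 1 else 0 : Sig))
      atTop (𝓝 zpt) := by
  rw [tendsto_pi_nhds]
  intro i
  apply tendsto_const_nhds.congr'
  filter_upwards [eventually_ge_atTop (i+1)] with j hj
  rw [if_pos (show i < j by omega)]
  rfl

omit hR in
lemma isOpen_cyl0 : IsOpen (cyl [(0 : Fin 2)]) := by
  have e : cyl [(0 : Fin 2)] = (fun x : Sig => x 0) ⁻¹' {0} := by
    ext x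
    constructor
    · intro h
      simpa using h 0 (by simp)
    · intro h i hi
      have : i = 0 := by simpa using hi
      subst this
      simpa using h
  rw [e]
  exact (continuous_apply 0).isOpen_preimage _ (isOpen_discrete _)

omit hR in
lemma zpt_mem_cyl0 : zpt ∈ cyl [(0 : Fin 2)] := by
  intro i hi
  have : i = 0 := by simpa using hi
  subst this
  rfl

lemma main3 {Hinf1 : ℝ} (hinf1 : Tendsto H1 atTop (𝓝 Hinf1)) :
    Filter.liminf (fun x => peierls H x zpt) (𝓝[≠] zpt)
      = (((⨅ n : ℕ, H0 (n + 1)) + Hinf1 : ℝ) : EReal) := by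
  rw [Filter.liminf_eq]
  apply le_antisymm
  · apply sSup_le
    rintro a ha
    simp only [Set.mem_setOf_eq] at ha
    rw [eventually_nhdsWithin_iff] at ha
    have key : ∀ m : ℕ, a ≤ ((H0 (m+1) + Hinf1 : ℝ) : EReal) := by
      intro m
      have htd := q_tendsto (m+1)
      have hev := htd.eventually ha
      obtain ⟨j, hj1, hj2⟩ := (hev.and (eventually_ge_atTop 1)).exists
      have hqne : (fun i => if i < j then 0 else if i < j + (m+1) then 1 else 0 : Sig) ≠ zpt := by
        intro e
        have h' := congrFun e j
        rw [if_neg (lt_irrefl j), if_pos (by omega)] at h'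
        have h'' : (1 : Fin 2) = 0 := h'.trans rfl
        exact absurd h'' (by decide)
      exact (hj1 (by simpa using hqne)).trans (peierls_q_le hR hinf1 j (m+1) hj2 (by omega))
    have h2 := ereal_le_ciInf (f := fun m => H0 (m+1) + Hinf1) key
    refine h2.trans (EReal.coe_le_coe_iff.2 ?_)
    rw [← sub_le_iff_le_add]
    apply le_ciInf
    intro m
    rw [sub_le_iff_le_add]
    apply ciInf_le ⟨Hinf1, ?_⟩ m
    rintro r ⟨i, rfl⟩
    have := hR.pos0 (i+1) (by omega)
    show Hinf1 ≤ H0 (i+1) + Hinf1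
    linarith
  · apply le_sSup
    simp only [Set.mem_setOf_eq]
    rw [eventually_nhdsWithin_iff]
    filter_upwards [isOpen_cyl0.mem_nhds zpt_mem_cyl0] with x hx hxne
    exact main3_lower hR hinf1 x hx (by simpa using hxne)

end Main


-- ===================== flip symmetry =====================

def flp : Fin 2 → Fin 2 := fun a => a + 1

def flipS (x : Sig) : Sig := fun n => flp (x n)

lemma flp_flp (a : Fin 2) : flp (flp a) = a := by
  simp only [flp]
  omega

lemma flp_inj {a b : Fin 2} (h : flp a = flp b) : a = b := by
  simp only [flp] at h
  omega

lemma flipS_flipS (x : Sig) : flipS (flipS x) = x := funext fun n => flp_flp _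

lemma flipS_inj : Function.Injective flipS :=
  Function.LeftInverse.injective (g := flipS) flipS_flipS

lemma flipS_cont : Continuous flipS :=
  continuous_pi fun n => (continuous_of_discreteTopology (f := flp)).comp (continuous_apply n)

lemma flipS_zpt : flipS zpt = opt := by
  funext n
  show flp 0 = 1
  decide

lemma flipS_opt : flipS opt = zpt := by
  funext n
  show flp 1 = 0
  decide

lemma flip_shft_iter (z : Sig) (k : ℕ) : shft^[k] (flipS z) = flipS (shft^[k] z) := by
  funext n
  rw [shft_iter]
  show flp (z (n + k)) = flp ((shft^[k] z) n)
  rw [shft_iter]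

lemma nClose_flip {n : ℕ} {x y : Sig} : nClose n (flipS x) (flipS y) ↔ nClose n x y := by
  constructor
  · intro h k hk
    exact flp_inj (h k hk)
  · intro h k hk
    exact congrArg flp (h k hk)

lemma mem_cyl_flip {x : Sig} {w : List (Fin 2)} (h : x ∈ cyl w) :
    flipS x ∈ cyl (w.map flp) := by
  intro i hi
  have hi' : i < w.length := by simpa using hi
  show flp (x i) = _
  rw [h i hi']
  simp [List.get_eq_getElem]

lemma map_flp_word0 (n : ℕ) :
    List.map flp ((0 : Fin 2) :: (List.replicate n 1 ++ [0])) =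
      (1 : Fin 2) :: (List.replicate n 0 ++ [1]) := by
  simp [List.map_replicate, show flp 0 = 1 by decide, show flp 1 = 0 by decide]

lemma map_flp_word1 (n : ℕ) :
    List.map flp ((1 : Fin 2) :: (List.replicate n 0 ++ [1])) =
      (0 : Fin 2) :: (List.replicate n 1 ++ [0]) := by
  simp [List.map_replicate, show flp 0 = 1 by decide, show flp 1 = 0 by decide]

lemma map_flp_word2 (n : ℕ) :
    List.map flp ((List.replicate n 0 ++ [1]) : List (Fin 2)) =
      (List.replicate n 1 ++ [0] : List (Fin 2)) := by
  simp [List.map_replicate, show flp 0 = 1 by decide, show flp 1 = 0 by decide]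

lemma ReducedDW.flip {H : Sig → ℝ} {H0 H1 : ℕ → ℝ} (hR : ReducedDW H H0 H1) :
    ReducedDW (fun x => H (flipS x)) H1 H0 where
  cont := hR.cont.comp flipS_cont
  nonneg := fun x => hR.nonneg _
  svar := by
    have e : ∀ n, Var (fun x => H (flipS x)) n = Var H n := by
      intro n
      unfold Var
      congr 1
      ext d
      constructor
      · rintro ⟨x, y, hc, rfl⟩
        exact ⟨flipS x, flipS y, nClose_flip.mpr hc, rfl⟩
      · rintro ⟨x, y, hc, rfl⟩
        exact ⟨flipS x, flipS y, nClose_flip.mpr hc, by simp [flipS_flipS]⟩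
    unfold SummableVar
    simp only [e]
    exact hR.svar
  zero := by
    intro x hx
    apply hR.zero (flipS x)
    rcases hx with h | h
    · right
      have := mem_cyl_flip h
      rwa [show List.map flp [(0:Fin 2), 0] = [1, 1] by decide] at this
    · left
      have := mem_cyl_flip h
      rwa [show List.map flp [(1:Fin 2), 1] = [0, 0] by decide] at this
  pos0 := hR.pos1
  pos1 := hR.pos0
  val0 := by
    intro n hn x hx
    apply hR.val1 n hn (flipS x)
    have := mem_cyl_flip hx
    rwa [map_flp_word0] at this
  val1 := by
    intro n hn x hx
    apply hR.val0 n hn (flipS x)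
    have := mem_cyl_flip hx
    rwa [map_flp_word1] at this
  bdd0 := hR.bdd1
  bdd1 := hR.bdd0
  sum0 := hR.sum1
  sum1 := hR.sum0

lemma peierls_flip {H : Sig → ℝ} {H0 H1 : ℕ → ℝ} (hR : ReducedDW H H0 H1) (x y : Sig) :
    peierls (fun w => H (flipS w)) x y = peierls H (flipS x) (flipS y) := by
  have hbk : ∀ (k : ℕ) (z : Sig), birk (fun w => H (flipS w)) k z = birk H k (flipS z) := by
    intro k z
    unfold birk
    rw [hbar0 hR.flip, hbar0 hR]
    apply Finset.sum_congr rfl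
    intro i _
    rw [flip_shft_iter]
  unfold peierls
  refine iSup_congr fun p => iSup_congr fun n => ?_
  unfold SBar
  congr 1
  ext s
  constructor
  · rintro ⟨k, hk, z, h1, h2, rfl⟩
    refine ⟨k, hk, flipS z, nClose_flip.mpr h1, ?_, by rw [hbk]⟩
    rw [flip_shft_iter]
    exact nClose_flip.mpr h2
  · rintro ⟨k, hk, z, h1, h2, rfl⟩
    refine ⟨k, hk, flipS z, ?_, ?_, ?_⟩
    · have := nClose_flip.mpr h1
      rwa [flipS_flipS] at this
    · rw [flip_shft_iter]
      have := nClose_flip.mpr h2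
      rwa [flipS_flipS] at this
    · rw [hbk, flipS_flipS]

def flipHomeo : Homeomorph Sig Sig :=
  ⟨⟨flipS, flipS, flipS_flipS, flipS_flipS⟩, flipS_cont, flipS_cont⟩

lemma map_flip_nhdsNe : Filter.map flipS (𝓝[≠] zpt) = 𝓝[≠] opt := by
  have h1 : Filter.map flipS (𝓝 zpt) = 𝓝 opt := by
    have := flipHomeo.map_nhds_eq zpt
    rw [show flipHomeo zpt = opt from flipS_zpt] at this
    exact this
  have h2 : flipS '' ({zpt}ᶜ : Set Sig) = ({opt}ᶜ : Set Sig) := by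
    ext y
    constructor
    · rintro ⟨x, hx, rfl⟩
      simp only [Set.mem_compl_iff, Set.mem_singleton_iff] at hx ⊢
      intro e
      apply hx
      rw [← flipS_flipS x, e, flipS_opt]
    · intro hy
      simp only [Set.mem_compl_iff, Set.mem_singleton_iff] at hy
      refine ⟨flipS y, ?_, flipS_flipS y⟩
      simp only [Set.mem_compl_iff, Set.mem_singleton_iff]
      intro e
      apply hy
      rw [← flipS_flipS y, e, flipS_zpt]
  rw [nhdsWithin, nhdsWithin, Filter.map_inf flipS_inj, h1, Filter.map_principal, h2]

lemma liminf_flip (u : Sig → EReal) :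
    Filter.liminf u (𝓝[≠] opt) = Filter.liminf (fun x => u (flipS x)) (𝓝[≠] zpt) := by
  rw [← map_flip_nhdsNe, Filter.liminf_eq, Filter.liminf_eq]
  rfl

/-- complete description of the Peierls barrier of a reduced double-well type
potential. -/
theorem stmt_9 (H : Sig → ℝ) (H0 H1 : ℕ → ℝ) (hR : ReducedDW H H0 H1)
    (Hinf0 Hinf1 : ℝ)
    (hinf0 : Tendsto H0 atTop (𝓝 Hinf0)) (hinf1 : Tendsto H1 atTop (𝓝 Hinf1)) :
    (∀ x ∈ cyl [0], peierls H zpt x = 0) ∧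
    (∀ n : ℕ, 1 ≤ n → ∀ x ∈ cyl (List.replicate n 1 ++ [0]),
      peierls H zpt x = ((⨅ k : ℕ, H0 (n + k) : ℝ) : EReal)) ∧
    peierls H zpt opt = ((Hinf0 : ℝ) : EReal) ∧
    Filter.liminf (fun x => peierls H x zpt) (𝓝[≠] zpt)
      = (((⨅ n : ℕ, H0 (n + 1)) + Hinf1 : ℝ) : EReal) ∧
    (∀ x ∈ cyl [1], peierls H opt x = 0) ∧
    (∀ n : ℕ, 1 ≤ n → ∀ x ∈ cyl (List.replicate n 0 ++ [1]),
      peierls H opt x = ((⨅ k : ℕ, H1 (n + k) : ℝ) : EReal)) ∧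
    peierls H opt zpt = ((Hinf1 : ℝ) : EReal) ∧
    Filter.liminf (fun x => peierls H x opt) (𝓝[≠] opt)
      = (((⨅ n : ℕ, H1 (n + 1)) + Hinf0 : ℝ) : EReal) := by
  have hR' : ReducedDW (fun x => H (flipS x)) H1 H0 := hR.flip
  refine ⟨main1 hR, main2 hR, main2' hR hinf0, main3 hR hinf1, ?_, ?_, ?_, ?_⟩
  · intro x hx
    have hx' : flipS x ∈ cyl [(0:Fin 2)] := by
      have := mem_cyl_flip hx
      rwa [show List.map flp [(1:Fin 2)] = [0] by decide] at this
    have h := main1 hR' (flipS x) hx'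
    rw [peierls_flip hR, flipS_zpt, flipS_flipS] at h
    exact h
  · intro n hn x hx
    have hx' : flipS x ∈ cyl (List.replicate n 1 ++ [0]) := by
      have := mem_cyl_flip hx
      rwa [map_flp_word2] at this
    have h := main2 hR' n hn (flipS x) hx'
    rw [peierls_flip hR, flipS_zpt, flipS_flipS] at h
    exact h
  · have h := main2' hR' hinf1
    rw [peierls_flip hR, flipS_zpt, flipS_opt] at h
    exact h
  · have h := main3 hR' hinf0
    rw [liminf_flip]
    have e : (fun x => peierls H (flipS x) opt) = (fun x => peierls (fun w => H (flipS w)) x zpt) := by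
      funext w
      rw [peierls_flip hR, flipS_zpt]
    rw [e]
    exact h
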